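/- Let k ≥ 1 and let x_1, …, x_k be real numbers satisfying: x_1 > 0; x_i ≥ 0 for all i ∈ {1, …, k}; and x_i ≤ 2·max_{j ∈ {1, …, i−1}} x_j for all i ∈ {2, …, k}. Then (∑_{i=1}^{k} i·2^{-i}·x_i) / (∑_{i=1}^{k} 2^{-i}·x_i) ≤ 3k/4 + 1/2. -/
import Mathlib

open Finset

private lemma key_sum_lb (k : ℕ) (x : ℕ → ℝ) (hx1 : 0 < x 1)
    (hx0 : ∀ i ∈ Finset.Icc 1 k, 0 ≤ x i)
    (hx2 : ∀ i, ∀ h2 : 2 ≤ i, i ≤ k →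
      x i ≤ 2 * (Finset.Icc 1 (i - 1)).sup' (Finset.nonempty_Icc.mpr (by omega)) x) :
    ∀ t (h1 : 1 ≤ t), t ≤ k →
      (t : ℝ) * (2:ℝ)^(-(t:ℤ)) * (Finset.Icc 1 t).sup' (Finset.nonempty_Icc.mpr h1) x
        ≤ ∑ i ∈ Finset.Icc 1 t, (2:ℝ)^(-(i:ℤ)) * x i := by
  intro t h1
  induction t, h1 using Nat.le_induction with
  | base =>
    intro _
    simp [Finset.Icc_self]
  | succ t ht ih =>
    intro htk
    have htk' : t ≤ k := by omega
    have ih' := ih htk'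
    have hne : (Finset.Icc 1 t).Nonempty := Finset.nonempty_Icc.mpr ht
    set Mt := (Finset.Icc 1 t).sup' hne x with hMt
    set Mt1 := (Finset.Icc 1 (t+1)).sup' (Finset.nonempty_Icc.mpr (by omega)) x with hMt1
    have hMtpos : 0 < Mt := lt_of_lt_of_le hx1 (Finset.le_sup' x (by simp [Finset.mem_Icc]; omega))
    have hx2t : x (t+1) ≤ 2 * Mt := by
      have := hx2 (t+1) (by omega) htk
      simpa using this
    have hxt1 : 0 ≤ x (t+1) := hx0 (t+1) (by simp [Finset.mem_Icc]; omega)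
    have hMt1le : Mt1 ≤ max Mt (x (t+1)) := by
      apply Finset.sup'_le
      intro j hj
      simp only [Finset.mem_Icc] at hj
      rcases Nat.lt_or_ge j (t+1) with h | h
      · exact le_trans (Finset.le_sup' x (by simp [Finset.mem_Icc]; omega)) (le_max_left _ _)
      · have : j = t + 1 := by omega
        subst this
        exact le_max_right _ _
    have hsum : ∑ i ∈ Finset.Icc 1 (t+1), (2:ℝ)^(-(i:ℤ)) * x i
        = (∑ i ∈ Finset.Icc 1 t, (2:ℝ)^(-(i:ℤ)) * x i) + (2:ℝ)^(-((t:ℤ)+1)) * x (t+1) := by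
      rw [Finset.sum_Icc_succ_top (by omega)]
      push_cast
      ring_nf
    have hz : (2:ℝ)^(-((t:ℤ)+1)) = (2:ℝ)^(-(t:ℤ)) / 2 := by
      rw [neg_add, zpow_add₀ (two_ne_zero), zpow_neg_one]
      ring
    have ha : (0:ℝ) < (2:ℝ)^(-(t:ℤ)) := by positivity
    have htr : (1:ℝ) ≤ (t:ℝ) := by exact_mod_cast ht
    rw [hsum]
    push_cast
    rw [hz]
    set a := (2:ℝ)^(-(t:ℤ))
    set S := ∑ i ∈ Finset.Icc 1 t, (2:ℝ)^(-(i:ℤ)) * x i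
    rcases le_total (x (t+1)) Mt with hc | hc
    · have h1 : Mt1 ≤ Mt := le_trans hMt1le (by simp [hc])
      nlinarith [mul_pos ha hMtpos, mul_nonneg (le_of_lt ha) hxt1,
        mul_le_mul_of_nonneg_left h1 (le_of_lt ha), mul_nonneg (mul_nonneg (le_of_lt ha) (le_of_lt hMtpos)) (sub_nonneg.mpr htr)]
    · have h1 : Mt1 ≤ x (t+1) := le_trans hMt1le (by simp [hc])
      nlinarith [mul_pos ha hMtpos, mul_nonneg (le_of_lt ha) hxt1,
        mul_le_mul_of_nonneg_left h1 (le_of_lt ha),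
        mul_le_mul_of_nonneg_left hx2t (mul_nonneg (le_of_lt ha) (sub_nonneg.mpr htr)),
        mul_le_mul_of_nonneg_left hx2t (le_of_lt ha)]

private lemma key_main (k : ℕ) (x : ℕ → ℝ) (hx1 : 0 < x 1)
    (hx0 : ∀ i ∈ Finset.Icc 1 k, 0 ≤ x i)
    (hx2 : ∀ i, ∀ h2 : 2 ≤ i, i ≤ k →
      x i ≤ 2 * (Finset.Icc 1 (i - 1)).sup' (Finset.nonempty_Icc.mpr (by omega)) x) :
    ∀ n, 1 ≤ n → n ≤ k →
      (∑ i ∈ Finset.Icc 1 n, (i : ℝ) * (2:ℝ)^(-(i:ℤ)) * x i)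
        ≤ (3 * (n:ℝ) / 4 + 1 / 2) * ∑ i ∈ Finset.Icc 1 n, (2:ℝ)^(-(i:ℤ)) * x i := by
  intro n h1
  induction n, h1 using Nat.le_induction with
  | base =>
    intro _
    simp [Finset.Icc_self]
    nlinarith [hx1]
  | succ n hn ih =>
    intro hnk
    have hnk' : n ≤ k := by omega
    have ih' := ih hnk'
    have hne : (Finset.Icc 1 n).Nonempty := Finset.nonempty_Icc.mpr hn
    set Mn := (Finset.Icc 1 n).sup' hne x with hMn
    have hMnpos : 0 < Mn := lt_of_lt_of_le hx1 (Finset.le_sup' x (by simp [Finset.mem_Icc]; omega))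
    have hx2n : x (n+1) ≤ 2 * Mn := by
      have := hx2 (n+1) (by omega) hnk
      simpa using this
    have hxn1 : 0 ≤ x (n+1) := hx0 (n+1) (by simp [Finset.mem_Icc]; omega)
    have hkey := key_sum_lb k x hx1 hx0 hx2 n hn hnk'
    rw [← hMn] at hkey
    have hz : (2:ℝ)^(-((n:ℤ)+1)) = (2:ℝ)^(-(n:ℤ)) / 2 := by
      rw [neg_add, zpow_add₀ (two_ne_zero), zpow_neg_one]
      ring
    have ha : (0:ℝ) < (2:ℝ)^(-(n:ℤ)) := by positivity
    have hnr : (1:ℝ) ≤ (n:ℝ) := by exact_mod_cast hn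
    have hsum1 : ∑ i ∈ Finset.Icc 1 (n+1), (2:ℝ)^(-(i:ℤ)) * x i
        = (∑ i ∈ Finset.Icc 1 n, (2:ℝ)^(-(i:ℤ)) * x i) + (2:ℝ)^(-((n:ℤ)+1)) * x (n+1) := by
      rw [Finset.sum_Icc_succ_top (by omega)]
      push_cast
      ring_nf
    have hsum2 : ∑ i ∈ Finset.Icc 1 (n+1), (i:ℝ) * (2:ℝ)^(-(i:ℤ)) * x i
        = (∑ i ∈ Finset.Icc 1 n, (i:ℝ) * (2:ℝ)^(-(i:ℤ)) * x i)
          + ((n:ℝ)+1) * (2:ℝ)^(-((n:ℤ)+1)) * x (n+1) := by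
      rw [Finset.sum_Icc_succ_top (by omega)]
      push_cast
      ring_nf
    rw [hsum1, hsum2, hz]
    push_cast
    set a := (2:ℝ)^(-(n:ℤ))
    set S := ∑ i ∈ Finset.Icc 1 n, (2:ℝ)^(-(i:ℤ)) * x i
    set A := ∑ i ∈ Finset.Icc 1 n, (i:ℝ) * (2:ℝ)^(-(i:ℤ)) * x i
    -- w := (a/2) * x (n+1) satisfies 0 ≤ w ≤ a * Mn, and n * (a*Mn) ≤ S
    have hw_le : (a/2) * x (n+1) ≤ a * Mn := by
      nlinarith [mul_le_mul_of_nonneg_left hx2n (by positivity : (0:ℝ) ≤ a/2)]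
    have hw_nn : 0 ≤ (a/2) * x (n+1) := by positivity
    nlinarith [ih', hkey, hw_le, hw_nn,
      mul_le_mul_of_nonneg_left hw_le (by linarith : (0:ℝ) ≤ (n:ℝ) - 1),
      mul_nonneg (mul_nonneg (le_of_lt ha) (le_of_lt hMnpos)) (by linarith : (0:ℝ) ≤ (n:ℝ) - 1)]

/-- For `k ≥ 1` and reals `x_1, …, x_k` with `x_1 > 0`, `x_i ≥ 0` for all
`i ∈ {1, …, k}`, and `x_i ≤ 2·max_{j ∈ {1, …, i−1}} x_j` for `i ∈ {2, …, k}`: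
`(∑ i·2^{-i}·x_i) / (∑ 2^{-i}·x_i) ≤ 3k/4 + 1/2`. -/
theorem stmt_12 (k : ℕ) (hk : 1 ≤ k) (x : ℕ → ℝ)
    (hx1 : 0 < x 1) (hx0 : ∀ i ∈ Finset.Icc 1 k, 0 ≤ x i)
    (hx2 : ∀ i, ∀ h2 : 2 ≤ i, i ≤ k →
      x i ≤ 2 * (Finset.Icc 1 (i - 1)).sup' (Finset.nonempty_Icc.mpr (by omega)) x) :
    (∑ i ∈ Finset.Icc 1 k, (i : ℝ) * (2 : ℝ) ^ (-(i : ℤ)) * x i) /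
        (∑ i ∈ Finset.Icc 1 k, (2 : ℝ) ^ (-(i : ℤ)) * x i) ≤
      3 * (k : ℝ) / 4 + 1 / 2 := by
  have hS : (0:ℝ) < ∑ i ∈ Finset.Icc 1 k, (2 : ℝ) ^ (-(i : ℤ)) * x i := by
    have h1m : (1:ℕ) ∈ Finset.Icc 1 k := by simp [Finset.mem_Icc]; omega
    have hle := Finset.single_le_sum (f := fun (i:ℕ) => (2:ℝ)^(-(i:ℤ)) * x i)
      (fun i hi => mul_nonneg (by positivity) (hx0 i hi)) h1m
    have : (0:ℝ) < (2:ℝ)^(-(1:ℤ)) * x 1 := by positivity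
    calc (0:ℝ) < (2:ℝ)^(-((1:ℕ):ℤ)) * x 1 := by norm_num at this ⊢; linarith
      _ ≤ _ := hle
  rw [div_le_iff₀ hS]
  exact key_main k x hx1 hx0 hx2 k hk le_rfl
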